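/- Let K_{SP} be a collection of vectors on S ⊎ P closed under subtraction, and K_{SQ} a collection on S ⊎ Q closed under addition with K_{SP} ∘ S ⊇ K_{SQ} ∘ S and K_{SP} × S ⊆ K_{SQ} × S. Then the equation K_{SP} ↔ K_{PQ} = K_{SQ}, subject to K_{PQ} being closed under addition, K_{SP} × P ⊆ K_{PQ} × P and K_{SP} ∘ P ⊇ K_{PQ} ∘ P, has K_{PQ} := K_{SP} ↔ K_{SQ} as its unique solution. -/

import Mathlib

/-- Uniqueness in implicit inversion: under the stated conditions,
`K_PQ := K_SP ↔ K_SQ` is the unique solution of `K_SP ↔ K_PQ = K_SQ` among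
collections closed under addition with `K_SP × P ⊆ K_PQ × P` and
`K_SP ∘ P ⊇ K_PQ ∘ P`. -/
theorem stmt10 {S P Q : Type*}
    (KSP : Set ((S → ℚ) × (P → ℚ))) (KSQ : Set ((S → ℚ) × (Q → ℚ)))
    (h0 : ((0, 0) : (S → ℚ) × (P → ℚ)) ∈ KSP)
    (hsub : ∀ x ∈ KSP, ∀ y ∈ KSP, x - y ∈ KSP)
    (hadd : ∀ x ∈ KSQ, ∀ y ∈ KSQ, x + y ∈ KSQ)
    (hres : {fS | ∃ fQ, (fS, fQ) ∈ KSQ} ⊆ {fS | ∃ fP, (fS, fP) ∈ KSP})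
    (hcon : {fS | ((fS, 0) : (S → ℚ) × (P → ℚ)) ∈ KSP} ⊆
      {fS | ((fS, 0) : (S → ℚ) × (Q → ℚ)) ∈ KSQ}) :
    ∀ KPQ : Set ((P → ℚ) × (Q → ℚ)),
      ((∀ x ∈ KPQ, ∀ y ∈ KPQ, x + y ∈ KPQ) ∧
       {fP | ((0, fP) : (S → ℚ) × (P → ℚ)) ∈ KSP} ⊆
         {fP | ((fP, 0) : (P → ℚ) × (Q → ℚ)) ∈ KPQ} ∧
       {fP | ∃ gQ, (fP, gQ) ∈ KPQ} ⊆ {fP | ∃ fS, (fS, fP) ∈ KSP} ∧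
       {y : (S → ℚ) × (Q → ℚ) | ∃ hP : P → ℚ, (y.1, hP) ∈ KSP ∧ (hP, y.2) ∈ KPQ} = KSQ)
      ↔ KPQ = {x : (P → ℚ) × (Q → ℚ) | ∃ fS, (fS, x.1) ∈ KSP ∧ (fS, x.2) ∈ KSQ} := by
  have haddSP : ∀ x ∈ KSP, ∀ y ∈ KSP, x + y ∈ KSP := by
    intro x hx y hy
    have h1 : ((0, 0) : (S → ℚ) × (P → ℚ)) - y ∈ KSP := hsub _ h0 _ hy
    have h2 := hsub _ hx _ h1
    convert h2 using 1
    ext <;> simp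
  intro KPQ
  constructor
  · rintro ⟨hKadd, hKcon, hKres, hKcomp⟩
    ext ⟨fP, gQ⟩
    constructor
    · intro hmem
      obtain ⟨fS, hfS⟩ := hKres ⟨gQ, hmem⟩
      exact ⟨fS, hfS, hKcomp ▸ ⟨fP, hfS, hmem⟩⟩
    · rintro ⟨fS, hSP, hSQ⟩
      rw [← hKcomp] at hSQ
      obtain ⟨hP, hSPh, hPQ⟩ := hSQ
      have hd : ((fS, fP) : (S → ℚ) × (P → ℚ)) - (fS, hP) ∈ KSP := hsub _ hSP _ hSPh
      have hd' : ((0 : S → ℚ), fP - hP) ∈ KSP := by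
        simpa [Prod.sub_def, sub_self] using hd
      have h1 : ((fP - hP, 0) : (P → ℚ) × (Q → ℚ)) ∈ KPQ := hKcon hd'
      have h2 := hKadd _ h1 _ hPQ
      simpa [Prod.add_def, sub_add_cancel] using h2
  · rintro rfl
    refine ⟨?_, ?_, ?_, ?_⟩
    · rintro ⟨fP, gQ⟩ ⟨fS, h1, h2⟩ ⟨fP', gQ'⟩ ⟨fS', h1', h2'⟩
      exact ⟨fS + fS', haddSP _ h1 _ h1', hadd _ h2 _ h2'⟩
    · intro fP hfP
      exact ⟨0, hfP, hcon h0⟩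
    · rintro fP ⟨gQ, fS, h1, h2⟩
      exact ⟨fS, h1⟩
    · ext ⟨fS, gQ⟩
      constructor
      · rintro ⟨hP, hSPh, fS', h1', h2'⟩
        have hd : ((fS, hP) : (S → ℚ) × (P → ℚ)) - (fS', hP) ∈ KSP := hsub _ hSPh _ h1'
        have hd' : ((fS - fS', 0) : (S → ℚ) × (P → ℚ)) ∈ KSP := by
          simpa [Prod.sub_def, sub_self] using hd
        have h3 := hadd _ (hcon hd') _ h2'
        simpa [Prod.add_def, sub_add_cancel] using h3
      · intro hmem
        obtain ⟨fP, hfP⟩ := hres ⟨gQ, hmem⟩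
        exact ⟨fP, hfP, fS, hfP, hmem⟩
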